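/- Fix 0 < K⁻ ≤ K⁺ and δ ∈ [−1,1], and set K := √(K⁺/K⁻). For u ∈ ℝ define V⁺(u) := u/√(u²+4), V⁻(u) := Ku/√(K²u²+4), r(u) := √(K²u²+4)/(K√(u²+4)), p⁺(u) := (1/2)(1 + r(u))(1 + δ·V⁻(u))/(1 + δ·V⁺(u)) and p⁻(u) := (1/2)(1 − r(u))(1 − δ·V⁻(u))/(1 + δ·V⁺(u)). Then p⁺(u) ≥ 0, p⁻(u) ≥ 0 and p⁺(u) + p⁻(u) = 1 for all u ∈ ℝ, and for every bounded measurable function f : ℝ → ℝ one has ∫_ℝ (p⁺(u)·f(Ku) + p⁻(u)·f(−Ku)) dÑ(K⁺,δ)(u) = ∫_ℝ f(u) dÑ(K⁻,δ)(u). In particular, there exist random variables U⁺ ~ Ñ(K⁺,δ) and U⁻ ~ Ñ(K⁻,δ) on a common probability space with U⁻ ∈ {KU⁺, −KU⁺} almost surely, so that K⁻(U⁻)² = K⁺(U⁺)² almost surely. -/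

import Mathlib

open MeasureTheory Real
open scoped ENNReal NNReal

/-- The density of the tilted Gaussian law Ñ(K,δ). -/
noncomputable def tiltDensity (K δ u : ℝ) : ℝ :=
  Real.sqrt (K / (2 * Real.pi)) * Real.exp (-(K * u ^ 2 / 2)) *
    (1 + δ * u / Real.sqrt (u ^ 2 + 4))

/-- The tilted Gaussian law Ñ(K,δ). -/
noncomputable def tiltedGaussian (K δ : ℝ) : Measure ℝ :=
  volume.withDensity fun u => ENNReal.ofReal (tiltDensity K δ u)

namespace Stmt13Aux

noncomputable def Vp (u : ℝ) : ℝ := u / Real.sqrt (u ^ 2 + 4)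
noncomputable def Vm (K u : ℝ) : ℝ := K * u / Real.sqrt (K ^ 2 * u ^ 2 + 4)
noncomputable def rr (K u : ℝ) : ℝ := Real.sqrt (K ^ 2 * u ^ 2 + 4) / (K * Real.sqrt (u ^ 2 + 4))
noncomputable def pp (K δ u : ℝ) : ℝ := (1 / 2) * (1 + rr K u) * (1 + δ * Vm K u) / (1 + δ * Vp u)
noncomputable def pm (K δ u : ℝ) : ℝ := (1 / 2) * (1 - rr K u) * (1 - δ * Vm K u) / (1 + δ * Vp u)
noncomputable def phi (K u : ℝ) : ℝ := Real.sqrt (K / (2 * Real.pi)) * Real.exp (-(K / 2) * u ^ 2)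

lemma sqrt4_pos (u : ℝ) : 0 < Real.sqrt (u ^ 2 + 4) := Real.sqrt_pos.2 (by positivity)

lemma sqrtK4_pos (K u : ℝ) : 0 < Real.sqrt (K ^ 2 * u ^ 2 + 4) := Real.sqrt_pos.2 (by positivity)

lemma abs_Vp_lt_one (u : ℝ) : |Vp u| < 1 := by
  rw [Vp, abs_div, abs_of_nonneg (Real.sqrt_nonneg _), div_lt_one (sqrt4_pos u),
    ← Real.sqrt_sq_eq_abs]
  exact Real.sqrt_lt_sqrt (by positivity) (by linarith)

lemma abs_Vm_le_one (K u : ℝ) : |Vm K u| ≤ 1 := by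
  rw [Vm, abs_div, abs_of_nonneg (Real.sqrt_nonneg _), div_le_one (sqrtK4_pos K u),
    ← Real.sqrt_sq_eq_abs]
  exact Real.sqrt_le_sqrt (by nlinarith)

lemma one_add_dVp_pos {δ : ℝ} (hδ : |δ| ≤ 1) (u : ℝ) : 0 < 1 + δ * Vp u := by
  have h1 : |δ * Vp u| < 1 := by
    rw [abs_mul]
    calc |δ| * |Vp u| ≤ 1 * |Vp u| := by
          exact mul_le_mul_of_nonneg_right hδ (abs_nonneg _)
      _ = |Vp u| := one_mul _
      _ < 1 := abs_Vp_lt_one u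
  have := neg_abs_le (δ * Vp u)
  linarith

lemma abs_dVm_le_one {δ : ℝ} (hδ : |δ| ≤ 1) (K u : ℝ) : |δ * Vm K u| ≤ 1 := by
  rw [abs_mul]
  calc |δ| * |Vm K u| ≤ 1 * 1 :=
        mul_le_mul hδ (abs_Vm_le_one K u) (abs_nonneg _) zero_le_one
    _ = 1 := one_mul 1

lemma rr_nonneg {K : ℝ} (hK : 0 < K) (u : ℝ) : 0 ≤ rr K u :=
  div_nonneg (Real.sqrt_nonneg _) (mul_nonneg hK.le (Real.sqrt_nonneg _))

lemma rr_le_one {K : ℝ} (hK : 1 ≤ K) (u : ℝ) : rr K u ≤ 1 := by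
  have hK0 : 0 < K := lt_of_lt_of_le one_pos hK
  rw [rr, div_le_one (mul_pos hK0 (sqrt4_pos u))]
  have h1 : K * Real.sqrt (u ^ 2 + 4) = Real.sqrt (K ^ 2 * (u ^ 2 + 4)) := by
    rw [Real.sqrt_mul (sq_nonneg K), Real.sqrt_sq hK0.le]
  rw [h1]
  exact Real.sqrt_le_sqrt (by nlinarith)

lemma rr_mul_Vm {K : ℝ} (hK : 0 < K) (u : ℝ) : rr K u * Vm K u = Vp u := by
  rw [rr, Vm, Vp]
  field_simp

lemma pp_nonneg {K δ : ℝ} (hK1 : 1 ≤ K) (hδ : |δ| ≤ 1) (u : ℝ) : 0 ≤ pp K δ u := by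
  have hK0 : 0 < K := lt_of_lt_of_le one_pos hK1
  have h1 := rr_nonneg hK0 u
  have h2 := abs_dVm_le_one hδ K u
  have h3 := neg_abs_le (δ * Vm K u)
  exact div_nonneg (by nlinarith) (one_add_dVp_pos hδ u).le

lemma pm_nonneg {K δ : ℝ} (hK1 : 1 ≤ K) (hδ : |δ| ≤ 1) (u : ℝ) : 0 ≤ pm K δ u := by
  have h1 := rr_le_one hK1 u
  have h2 := abs_dVm_le_one hδ K u
  have h3 := le_abs_self (δ * Vm K u)
  exact div_nonneg (by nlinarith) (one_add_dVp_pos hδ u).le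

lemma pp_add_pm {K δ : ℝ} (hK0 : 0 < K) (hδ : |δ| ≤ 1) (u : ℝ) : pp K δ u + pm K δ u = 1 := by
  rw [pp, pm, ← add_div, div_eq_one_iff_eq (one_add_dVp_pos hδ u).ne']
  linear_combination δ * rr_mul_Vm hK0 u

lemma pp_le_one {K δ : ℝ} (hK1 : 1 ≤ K) (hδ : |δ| ≤ 1) (u : ℝ) : pp K δ u ≤ 1 := by
  have := pm_nonneg hK1 hδ u
  have := pp_add_pm (lt_of_lt_of_le one_pos hK1) hδ u
  linarith


lemma Vp_neg (u : ℝ) : Vp (-u) = -(Vp u) := by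
  rw [Vp, Vp, show (-u) ^ 2 + 4 = u ^ 2 + 4 by ring, neg_div]

lemma Vm_neg (K u : ℝ) : Vm K (-u) = -(Vm K u) := by
  rw [Vm, Vm, show K ^ 2 * (-u) ^ 2 + 4 = K ^ 2 * u ^ 2 + 4 by ring,
    show K * -u = -(K * u) by ring, neg_div]

lemma rr_neg (K u : ℝ) : rr K (-u) = rr K u := by
  rw [rr, rr, show K ^ 2 * (-u) ^ 2 + 4 = K ^ 2 * u ^ 2 + 4 by ring,
    show (-u) ^ 2 + 4 = u ^ 2 + 4 by ring]

lemma phi_neg (K u : ℝ) : phi K (-u) = phi K u := by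
  rw [phi, phi, show (-u) ^ 2 = u ^ 2 by ring]

lemma phi_nonneg (K u : ℝ) : 0 ≤ phi K u := by rw [phi]; positivity

lemma tiltDensity_eq (K δ u : ℝ) : tiltDensity K δ u = phi K u * (1 + δ * Vp u) := by
  rw [tiltDensity, phi, Vp, show -(K * u ^ 2 / 2) = -(K / 2) * u ^ 2 by ring, mul_div_assoc]

lemma tiltDensity_nonneg {δ : ℝ} (hδ : |δ| ≤ 1) (K u : ℝ) : 0 ≤ tiltDensity K δ u := by
  rw [tiltDensity_eq]
  exact mul_nonneg (phi_nonneg K u) (one_add_dVp_pos hδ u).le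

lemma continuous_sqrt4 : Continuous fun u : ℝ => Real.sqrt (u ^ 2 + 4) :=
  Real.continuous_sqrt.comp (by continuity)

lemma continuous_sqrtK4 (K : ℝ) : Continuous fun u : ℝ => Real.sqrt (K ^ 2 * u ^ 2 + 4) :=
  Real.continuous_sqrt.comp (by continuity)

lemma continuous_Vp : Continuous Vp :=
  continuous_id.div continuous_sqrt4 fun x => (sqrt4_pos x).ne'

lemma continuous_Vm (K : ℝ) : Continuous (Vm K) :=
  (continuous_const.mul continuous_id).div (continuous_sqrtK4 K) fun x => (sqrtK4_pos K x).ne'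

lemma continuous_rr {K : ℝ} (hK : 0 < K) : Continuous (rr K) :=
  (continuous_sqrtK4 K).div (continuous_const.mul continuous_sqrt4)
    fun x => (mul_pos hK (sqrt4_pos x)).ne'

lemma continuous_pp {K δ : ℝ} (hK : 0 < K) (hδ : |δ| ≤ 1) : Continuous (pp K δ) :=
  ((continuous_const.mul (continuous_const.add (continuous_rr hK))).mul
    (continuous_const.add (continuous_const.mul (continuous_Vm K)))).div
    (continuous_const.add (continuous_const.mul continuous_Vp))
    fun x => (one_add_dVp_pos hδ x).ne'

lemma continuous_phi (K : ℝ) : Continuous (phi K) :=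
  continuous_const.mul (Real.continuous_exp.comp (by continuity))

lemma continuous_tiltDensity (K δ : ℝ) : Continuous (tiltDensity K δ) := by
  have : tiltDensity K δ = fun u => phi K u * (1 + δ * Vp u) := funext (tiltDensity_eq K δ)
  rw [this]
  exact (continuous_phi K).mul (continuous_const.add (continuous_const.mul continuous_Vp))

lemma integrable_of_bound (w g : ℝ → ℝ) (hw : Continuous w) {c : ℝ} (C : ℝ) (hc : 0 < c)
    (hwb : ∀ u, |w u| ≤ C * Real.exp (-(c / 2) * u ^ 2)) (hg : Measurable g) (Cg : ℝ)
    (hgb : ∀ x, |g x| ≤ Cg) : Integrable (fun u => w u * g u) := by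
  have base : Integrable (fun u : ℝ => Real.exp (-(c / 2) * u ^ 2)) :=
    integrable_exp_neg_mul_sq (by positivity)
  refine ((base.const_mul (C * Cg)).mono' (hw.aestronglyMeasurable.mul hg.aestronglyMeasurable) ?_)
  filter_upwards with u
  have h1 := hwb u
  have h2 := hgb u
  have h0 : 0 ≤ Cg := le_trans (abs_nonneg _) (hgb 0)
  have h3 : 0 ≤ C * Real.exp (-(c / 2) * u ^ 2) := le_trans (abs_nonneg _) h1
  rw [Real.norm_eq_abs, abs_mul]
  calc |w u| * |g u| ≤ (C * Real.exp (-(c / 2) * u ^ 2)) * Cg :=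
        mul_le_mul h1 h2 (abs_nonneg _) h3
    _ = C * Cg * Real.exp (-(c / 2) * u ^ 2) := by ring

lemma integrable_phi {K : ℝ} (hK : 0 < K) : Integrable (phi K) := by
  unfold phi
  exact (integrable_exp_neg_mul_sq (show (0:ℝ) < K / 2 by positivity)).const_mul _

lemma integral_tilted {δ : ℝ} (K : ℝ) (hδ : |δ| ≤ 1) (g : ℝ → ℝ) :
    ∫ u, g u ∂(tiltedGaussian K δ) = ∫ u, tiltDensity K δ u * g u := by
  rw [tiltedGaussian,
    show (fun u => ENNReal.ofReal (tiltDensity K δ u))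
      = (fun u => ((fun v => (tiltDensity K δ v).toNNReal) u : ℝ≥0∞)) from rfl,
    integral_withDensity_eq_integral_smul
      ((continuous_tiltDensity K δ).measurable.real_toNNReal) g]
  congr 1
  funext u
  rw [NNReal.smul_def, smul_eq_mul, Real.coe_toNNReal _ (tiltDensity_nonneg hδ K u)]

lemma integral_phi {K : ℝ} (hK : 0 < K) : ∫ u, phi K u = 1 := by
  unfold phi
  rw [MeasureTheory.integral_const_mul, integral_gaussian,
    ← Real.sqrt_mul (by positivity : (0:ℝ) ≤ K / (2 * π))]
  have h1 : K / (2 * π) * (π / (K / 2)) = 1 := by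
    field_simp [Real.pi_ne_zero, hK.ne']
  rw [h1]
  exact Real.sqrt_one

lemma tilted_isProb {δ : ℝ} (K : ℝ) (hK : 0 < K) (hδ : |δ| ≤ 1) :
    IsProbabilityMeasure (tiltedGaussian K δ) := by
  constructor
  rw [tiltedGaussian, withDensity_apply _ MeasurableSet.univ, Measure.restrict_univ]
  have hint : Integrable (tiltDensity K δ) := by
    have := integrable_of_bound (tiltDensity K δ) (fun _ => (1:ℝ))
      (continuous_tiltDensity K δ) (c := K) (2 * Real.sqrt (K / (2 * π))) hK
      (fun u => by
        rw [abs_of_nonneg (tiltDensity_nonneg hδ K u), tiltDensity_eq]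
        have h1 := abs_Vp_lt_one u
        have h2 : δ * Vp u ≤ 1 := by
          have := abs_dVm_le_one hδ K u
          have h3 : |δ * Vp u| ≤ 1 := by
            rw [abs_mul]
            calc |δ| * |Vp u| ≤ 1 * 1 :=
                  mul_le_mul hδ (abs_Vp_lt_one u).le (abs_nonneg _) zero_le_one
              _ = 1 := one_mul 1
          linarith [le_abs_self (δ * Vp u)]
        have h4 := phi_nonneg K u
        have h5 : phi K u = Real.sqrt (K / (2 * π)) * Real.exp (-(K / 2) * u ^ 2) := rfl
        nlinarith [Real.exp_pos (-(K / 2) * u ^ 2), Real.sqrt_nonneg (K / (2 * π))])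
      measurable_const 1 (by norm_num)
    simpa using this
  rw [← ofReal_integral_eq_lintegral_ofReal hint (ae_of_all _ (tiltDensity_nonneg hδ K))]
  have hIodd : Integrable (fun u => phi K u * (δ * Vp u)) := by
    refine integrable_of_bound (phi K) (fun u => δ * Vp u) (continuous_phi K)
      (c := K) (Real.sqrt (K / (2 * π))) hK
      (fun u => le_of_eq (by rw [abs_of_nonneg (phi_nonneg K u), phi]))
      (continuous_const.mul continuous_Vp).measurable 1
      (fun x => by
        rw [abs_mul]
        calc |δ| * |Vp x| ≤ 1 * 1 :=
              mul_le_mul hδ (abs_Vp_lt_one x).le (abs_nonneg _) zero_le_one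
          _ = 1 := one_mul 1)
  have hsplit : (fun u => tiltDensity K δ u) = fun u => phi K u + phi K u * (δ * Vp u) :=
    funext fun u => by rw [tiltDensity_eq]; ring
  have h2 : ∫ u, phi K u * (δ * Vp u) = 0 := by
    set g := fun u => phi K u * (δ * Vp u) with hg
    have hodd : (fun x => g (-x)) = fun x => -(g x) := funext fun x => by
      simp only [hg]; rw [phi_neg, Vp_neg]; ring
    have h3 := MeasureTheory.integral_neg_eq_self g (volume : Measure ℝ)
    rw [hodd, MeasureTheory.integral_neg] at h3
    linarith
  rw [hsplit, integral_add (integrable_phi hK) hIodd, integral_phi hK, h2]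
  norm_num

noncomputable def wp (K Kp δ u : ℝ) : ℝ :=
  (1 / 2) * (1 + rr K u) * (1 + δ * Vm K u) * phi Kp u

noncomputable def wm (K Kp δ u : ℝ) : ℝ :=
  (1 / 2) * (1 - rr K u) * (1 - δ * Vm K u) * phi Kp u

lemma pp_mul_tilt {K Kp δ : ℝ} (hδ : |δ| ≤ 1) (u : ℝ) :
    pp K δ u * tiltDensity Kp δ u = wp K Kp δ u := by
  rw [pp, tiltDensity_eq, wp]
  field_simp [(one_add_dVp_pos hδ u).ne']

lemma pm_mul_tilt {K Kp δ : ℝ} (hδ : |δ| ≤ 1) (u : ℝ) :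
    pm K δ u * tiltDensity Kp δ u = wm K Kp δ u := by
  rw [pm, tiltDensity_eq, wm]
  field_simp [(one_add_dVp_pos hδ u).ne']

lemma wp_abs_le {K Kp δ : ℝ} (hK1 : 1 ≤ K) (hδ : |δ| ≤ 1) (u : ℝ) :
    |wp K Kp δ u| ≤ 2 * phi Kp u := by
  have hK0 : 0 < K := lt_of_lt_of_le one_pos hK1
  have h1 := rr_nonneg hK0 u
  have h1' := rr_le_one hK1 u
  have h2 := abs_dVm_le_one hδ K u
  have h2a := neg_abs_le (δ * Vm K u)
  have h2b := le_abs_self (δ * Vm K u)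
  have h3 := phi_nonneg Kp u
  have hr0 : 0 ≤ 1 + rr K u := by linarith
  have hr2 : 1 + rr K u ≤ 2 := by linarith
  have hs0 : 0 ≤ 1 + δ * Vm K u := by linarith
  have hs2 : 1 + δ * Vm K u ≤ 2 := by linarith
  have hprod : (1 + rr K u) * (1 + δ * Vm K u) ≤ 2 * 2 :=
    mul_le_mul hr2 hs2 hs0 (by norm_num)
  have hprod0 : 0 ≤ (1 + rr K u) * (1 + δ * Vm K u) := mul_nonneg hr0 hs0
  rw [wp, abs_of_nonneg (by positivity)]
  calc (1 / 2) * (1 + rr K u) * (1 + δ * Vm K u) * phi Kp u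
      = ((1 + rr K u) * (1 + δ * Vm K u)) * ((1 / 2) * phi Kp u) := by ring
    _ ≤ (2 * 2) * ((1 / 2) * phi Kp u) := by
        apply mul_le_mul_of_nonneg_right hprod (by positivity)
    _ = 2 * phi Kp u := by ring

lemma wm_abs_le {K Kp δ : ℝ} (hK1 : 1 ≤ K) (hδ : |δ| ≤ 1) (u : ℝ) :
    |wm K Kp δ u| ≤ 2 * phi Kp u := by
  have hK0 : 0 < K := lt_of_lt_of_le one_pos hK1
  have h1 := rr_nonneg hK0 u
  have h1' := rr_le_one hK1 u
  have h2 := abs_dVm_le_one hδ K u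
  have h2a := neg_abs_le (δ * Vm K u)
  have h2b := le_abs_self (δ * Vm K u)
  have h3 := phi_nonneg Kp u
  have hr0 : 0 ≤ 1 - rr K u := by linarith
  have hr2 : 1 - rr K u ≤ 2 := by linarith
  have hs0 : 0 ≤ 1 - δ * Vm K u := by linarith
  have hs2 : 1 - δ * Vm K u ≤ 2 := by linarith
  have hprod : (1 - rr K u) * (1 - δ * Vm K u) ≤ 2 * 2 :=
    mul_le_mul hr2 hs2 hs0 (by norm_num)
  have hprod0 : 0 ≤ (1 - rr K u) * (1 - δ * Vm K u) := mul_nonneg hr0 hs0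
  rw [wm, abs_of_nonneg (by
    have : 0 ≤ ((1 - rr K u) * (1 - δ * Vm K u)) * phi Kp u := mul_nonneg hprod0 h3
    linarith [mul_nonneg hprod0 h3]
    )]
  calc (1 / 2) * (1 - rr K u) * (1 - δ * Vm K u) * phi Kp u
      = ((1 - rr K u) * (1 - δ * Vm K u)) * ((1 / 2) * phi Kp u) := by ring
    _ ≤ (2 * 2) * ((1 / 2) * phi Kp u) := by
        apply mul_le_mul_of_nonneg_right hprod (by positivity)
    _ = 2 * phi Kp u := by ring

lemma continuous_wp {K Kp δ : ℝ} (hK0 : 0 < K) : Continuous (wp K Kp δ) :=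
  ((continuous_const.mul (continuous_const.add (continuous_rr hK0))).mul
    (continuous_const.add (continuous_const.mul (continuous_Vm K)))).mul (continuous_phi Kp)

lemma continuous_wm {K Kp δ : ℝ} (hK0 : 0 < K) : Continuous (wm K Kp δ) :=
  ((continuous_const.mul (continuous_const.sub (continuous_rr hK0))).mul
    (continuous_const.sub (continuous_const.mul (continuous_Vm K)))).mul (continuous_phi Kp)

lemma phi_scale {Km Kp K : ℝ} (hK0 : 0 < K) (hKK : K ^ 2 * Km = Kp) (x : ℝ) :
    phi Kp (x / K) = K * phi Km x := by
  rw [phi, phi]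
  have e1 : Kp / (2 * π) = K ^ 2 * (Km / (2 * π)) := by rw [← hKK]; ring
  have e2 : -(Kp / 2) * (x / K) ^ 2 = -(Km / 2) * x ^ 2 := by
    rw [← hKK]; field_simp
  rw [e1, Real.sqrt_mul (sq_nonneg K), Real.sqrt_sq hK0.le, e2]
  ring

lemma Vm_div (K : ℝ) (hK0 : 0 < K) (x : ℝ) : Vm K (x / K) = Vp x := by
  rw [Vm, Vp, show K * (x / K) = x by field_simp,
    show K ^ 2 * (x / K) ^ 2 + 4 = x ^ 2 + 4 by field_simp]

lemma key_pointwise {Km Kp δ K : ℝ} (hK0 : 0 < K) (hKK : K ^ 2 * Km = Kp) (hδ : |δ| ≤ 1)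
    (x : ℝ) :
    K⁻¹ * (wp K Kp δ (x / K) + wm K Kp δ (-(x / K))) = tiltDensity Km δ x := by
  rw [wp, wm, tiltDensity_eq, rr_neg, Vm_neg, phi_neg, Vm_div K hK0,
    phi_scale hK0 hKK]
  field_simp
  ring

lemma master {Km Kp δ K : ℝ} (hKm : 0 < Km) (hKp : 0 < Kp) (hδ : |δ| ≤ 1)
    (hK0 : 0 < K) (hK1 : 1 ≤ K) (hKK : K ^ 2 * Km = Kp)
    (f : ℝ → ℝ) (hf : Measurable f) (Cf : ℝ) (hCf : ∀ x, |f x| ≤ Cf) :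
    ∫ u, (pp K δ u * f (K * u) + pm K δ u * f (-(K * u))) ∂(tiltedGaussian Kp δ)
      = ∫ u, f u ∂(tiltedGaussian Km δ) := by
  have hphi_bound : ∀ u : ℝ, |wp K Kp δ u| ≤ (2 * Real.sqrt (Kp / (2 * π)))
      * Real.exp (-(Kp / 2) * u ^ 2) := fun u => by
    calc |wp K Kp δ u| ≤ 2 * phi Kp u := wp_abs_le hK1 hδ u
      _ = (2 * Real.sqrt (Kp / (2 * π))) * Real.exp (-(Kp / 2) * u ^ 2) := by rw [phi]; ring
  have hphi_bound' : ∀ u : ℝ, |wm K Kp δ u| ≤ (2 * Real.sqrt (Kp / (2 * π)))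
      * Real.exp (-(Kp / 2) * u ^ 2) := fun u => by
    calc |wm K Kp δ u| ≤ 2 * phi Kp u := wm_abs_le hK1 hδ u
      _ = (2 * Real.sqrt (Kp / (2 * π))) * Real.exp (-(Kp / 2) * u ^ 2) := by rw [phi]; ring
  have hscaled_p : ∀ x : ℝ, |wp K Kp δ (x / K)| ≤ (2 * K * Real.sqrt (Km / (2 * π)))
      * Real.exp (-(Km / 2) * x ^ 2) := fun x => by
    calc |wp K Kp δ (x / K)| ≤ 2 * phi Kp (x / K) := wp_abs_le hK1 hδ _
      _ = 2 * (K * phi Km x) := by rw [phi_scale hK0 hKK]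
      _ = (2 * K * Real.sqrt (Km / (2 * π))) * Real.exp (-(Km / 2) * x ^ 2) := by
          rw [phi]; ring
  have hscaled_m : ∀ x : ℝ, |wm K Kp δ (-(x / K))| ≤ (2 * K * Real.sqrt (Km / (2 * π)))
      * Real.exp (-(Km / 2) * x ^ 2) := fun x => by
    calc |wm K Kp δ (-(x / K))| ≤ 2 * phi Kp (-(x / K)) := wm_abs_le hK1 hδ _
      _ = 2 * (K * phi Km x) := by rw [phi_neg, phi_scale hK0 hKK]
      _ = (2 * K * Real.sqrt (Km / (2 * π))) * Real.exp (-(Km / 2) * x ^ 2) := by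
          rw [phi]; ring
  have I1 : Integrable (fun u => wp K Kp δ u * f (K * u)) :=
    integrable_of_bound _ _ (continuous_wp hK0) _ hKp hphi_bound
      (hf.comp (measurable_id.const_mul K)) Cf (fun x => hCf _)
  have I2 : Integrable (fun u => wm K Kp δ u * f (-(K * u))) :=
    integrable_of_bound _ _ (continuous_wm hK0) _ hKp hphi_bound'
      (hf.comp (measurable_id.const_mul K).neg) Cf (fun x => hCf _)
  have I3 : Integrable (fun x => wp K Kp δ (x / K) * f x) :=
    integrable_of_bound _ _ ((continuous_wp hK0).comp (continuous_id.div_const K)) _ hKm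
      hscaled_p hf Cf hCf
  have I4 : Integrable (fun x => wm K Kp δ (-(x / K)) * f x) :=
    integrable_of_bound _ _ ((continuous_wm hK0).comp (continuous_id.div_const K).neg) _ hKm
      hscaled_m hf Cf hCf
  rw [integral_tilted Kp hδ, integral_tilted Km hδ]
  have hL : (fun u => tiltDensity Kp δ u * (pp K δ u * f (K * u) + pm K δ u * f (-(K * u))))
      = fun u => wp K Kp δ u * f (K * u) + wm K Kp δ u * f (-(K * u)) := funext fun u => by
    have h1 := pp_mul_tilt (K := K) (Kp := Kp) hδ u
    have h2 := pm_mul_tilt (K := K) (Kp := Kp) hδ u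
    linear_combination f (K * u) * h1 + f (-(K * u)) * h2
  rw [hL, integral_add I1 I2]
  have e1 : ∫ u, wp K Kp δ u * f (K * u)
      = |K⁻¹| • ∫ x, wp K Kp δ (x / K) * f x := by
    rw [← Measure.integral_comp_mul_left (fun x => wp K Kp δ (x / K) * f x) K]
    congr 1
    funext u
    show wp K Kp δ u * f (K * u) = wp K Kp δ (K * u / K) * f (K * u)
    rw [mul_div_cancel_left₀ _ hK0.ne']
  have e2 : ∫ u, wm K Kp δ u * f (-(K * u))
      = |(-K)⁻¹| • ∫ x, wm K Kp δ (-(x / K)) * f x := by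
    rw [← Measure.integral_comp_mul_left (fun x => wm K Kp δ (-(x / K)) * f x) (-K)]
    congr 1
    funext u
    show wm K Kp δ u * f (-(K * u)) = wm K Kp δ (-(-K * u / K)) * f (-K * u)
    rw [show -K * u = -(K * u) by ring, show -(-(K * u) / K) = u by
      rw [neg_div, neg_neg, mul_div_cancel_left₀ _ hK0.ne']]
  rw [e1, e2,
    show |K⁻¹| = K⁻¹ by rw [abs_inv, abs_of_pos hK0],
    show |(-K)⁻¹| = K⁻¹ by rw [abs_inv, abs_neg, abs_of_pos hK0],
    ← smul_add, ← integral_add I3 I4, ← integral_smul]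
  congr 1
  funext x
  rw [smul_eq_mul]
  linear_combination f x * key_pointwise hK0 hKK hδ x

lemma inner_int {c : ℝ} (a b : ℝ) (hc0 : 0 ≤ c) (hc1 : c ≤ 1) :
    ∫ t in Set.Ioc (0:ℝ) 1, (if t ≤ c then a else b) = c * a + (1 - c) * b := by
  have hi1 : IntegrableOn (fun t : ℝ => if t ≤ c then a else b) (Set.Ioc 0 c) volume := by
    have h0 : IntegrableOn (fun _ : ℝ => a) (Set.Ioc 0 c) volume :=
      integrableOn_const measure_Ioc_lt_top.ne enorm_ne_top
    exact h0.congr_fun (fun t ht => (if_pos ht.2).symm) measurableSet_Ioc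
  have hi2 : IntegrableOn (fun t : ℝ => if t ≤ c then a else b) (Set.Ioc c 1) volume := by
    have h0 : IntegrableOn (fun _ : ℝ => b) (Set.Ioc c 1) volume :=
      integrableOn_const measure_Ioc_lt_top.ne enorm_ne_top
    exact h0.congr_fun (fun t ht => (if_neg (not_le.2 ht.1)).symm) measurableSet_Ioc
  rw [← Set.Ioc_union_Ioc_eq_Ioc hc0 hc1,
    setIntegral_union (Set.Ioc_disjoint_Ioc_of_le le_rfl) measurableSet_Ioc hi1 hi2]
  have e1 : ∫ t in Set.Ioc (0:ℝ) c, (if t ≤ c then a else b) = c * a := by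
    rw [setIntegral_congr_fun measurableSet_Ioc (fun t ht => if_pos ht.2),
      setIntegral_const, Real.volume_real_Ioc_of_le (by linarith), smul_eq_mul]
    ring
  have e2 : ∫ t in Set.Ioc c (1:ℝ), (if t ≤ c then a else b) = (1 - c) * b := by
    rw [setIntegral_congr_fun measurableSet_Ioc (fun t ht => if_neg (not_le.2 ht.1)),
      setIntegral_const, Real.volume_real_Ioc_of_le (by linarith), smul_eq_mul]
  rw [e1, e2]

end Stmt13Aux

/-- coupling of the tilted Gaussian laws Ñ(K⁻,δ) and Ñ(K⁺,δ). -/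
theorem stmt13 (Km Kp δ : ℝ) (hKm : 0 < Km) (hle : Km ≤ Kp)
    (hδ : δ ∈ Set.Icc (-1 : ℝ) 1) :
    (let K : ℝ := Real.sqrt (Kp / Km)
     let Vp : ℝ → ℝ := fun u => u / Real.sqrt (u ^ 2 + 4)
     let Vm : ℝ → ℝ := fun u => K * u / Real.sqrt (K ^ 2 * u ^ 2 + 4)
     let r : ℝ → ℝ := fun u => Real.sqrt (K ^ 2 * u ^ 2 + 4) / (K * Real.sqrt (u ^ 2 + 4))
     let pp : ℝ → ℝ := fun u => (1 / 2) * (1 + r u) * (1 + δ * Vm u) / (1 + δ * Vp u)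
     let pm : ℝ → ℝ := fun u => (1 / 2) * (1 - r u) * (1 - δ * Vm u) / (1 + δ * Vp u)
     (∀ u : ℝ, 0 ≤ pp u) ∧ (∀ u : ℝ, 0 ≤ pm u) ∧ (∀ u : ℝ, pp u + pm u = 1) ∧
     (∀ f : ℝ → ℝ, Measurable f → (∃ Cf : ℝ, ∀ x, |f x| ≤ Cf) →
        ∫ u, (pp u * f (K * u) + pm u * f (-(K * u))) ∂(tiltedGaussian Kp δ) =
          ∫ u, f u ∂(tiltedGaussian Km δ)) ∧
     ∃ (Ω : Type) (_ : MeasurableSpace Ω) (P : Measure Ω),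
       IsProbabilityMeasure P ∧
       ∃ Up Um : Ω → ℝ, Measurable Up ∧ Measurable Um ∧
         P.map Up = tiltedGaussian Kp δ ∧
         P.map Um = tiltedGaussian Km δ ∧
         (∀ᵐ ω ∂P, Um ω = K * Up ω ∨ Um ω = -(K * Up ω)) ∧
         (∀ᵐ ω ∂P, Km * (Um ω) ^ 2 = Kp * (Up ω) ^ 2)) := by
  have hKp : 0 < Kp := lt_of_lt_of_le hKm hle
  have hδ' : |δ| ≤ 1 := abs_le.2 ⟨hδ.1, hδ.2⟩
  set K : ℝ := Real.sqrt (Kp / Km) with hKdef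
  have hK0 : 0 < K := Real.sqrt_pos.2 (by positivity)
  have hK1 : 1 ≤ K := Real.one_le_sqrt.2 ((one_le_div hKm).2 hle)
  have hKK : K ^ 2 * Km = Kp := by
    rw [hKdef, Real.sq_sqrt (by positivity : (0:ℝ) ≤ Kp / Km)]
    field_simp
  show (∀ u : ℝ, 0 ≤ Stmt13Aux.pp K δ u) ∧ (∀ u : ℝ, 0 ≤ Stmt13Aux.pm K δ u) ∧
      (∀ u : ℝ, Stmt13Aux.pp K δ u + Stmt13Aux.pm K δ u = 1) ∧
      (∀ f : ℝ → ℝ, Measurable f → (∃ Cf : ℝ, ∀ x, |f x| ≤ Cf) →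
        ∫ u, (Stmt13Aux.pp K δ u * f (K * u) + Stmt13Aux.pm K δ u * f (-(K * u)))
            ∂(tiltedGaussian Kp δ) = ∫ u, f u ∂(tiltedGaussian Km δ)) ∧
      (∃ (Ω : Type) (_ : MeasurableSpace Ω) (P : Measure Ω),
        IsProbabilityMeasure P ∧
        ∃ Up Um : Ω → ℝ, Measurable Up ∧ Measurable Um ∧
          P.map Up = tiltedGaussian Kp δ ∧
          P.map Um = tiltedGaussian Km δ ∧
          (∀ᵐ ω ∂P, Um ω = K * Up ω ∨ Um ω = -(K * Up ω)) ∧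
          (∀ᵐ ω ∂P, Km * (Um ω) ^ 2 = Kp * (Up ω) ^ 2))
  refine ⟨fun u => Stmt13Aux.pp_nonneg hK1 hδ' u, fun u => Stmt13Aux.pm_nonneg hK1 hδ' u,
    fun u => Stmt13Aux.pp_add_pm hK0 hδ' u,
    fun f hf hb => by obtain ⟨Cf, hCf⟩ := hb; exact Stmt13Aux.master hKm hKp hδ' hK0 hK1 hKK f hf Cf hCf,
    ?_⟩
  haveI hPp : IsProbabilityMeasure (tiltedGaussian Kp δ) := Stmt13Aux.tilted_isProb Kp hKp hδ'
  haveI hPm : IsProbabilityMeasure (tiltedGaussian Km δ) := Stmt13Aux.tilted_isProb Km hKm hδ'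
  set ν : Measure ℝ := volume.restrict (Set.Ioc (0:ℝ) 1) with hν
  haveI : IsProbabilityMeasure ν := by
    constructor
    rw [hν, Measure.restrict_apply_univ, Real.volume_Ioc]
    norm_num
  set P : Measure (ℝ × ℝ) := (tiltedGaussian Kp δ).prod ν with hP
  set Um : ℝ × ℝ → ℝ :=
    fun ω => if ω.2 ≤ Stmt13Aux.pp K δ ω.1 then K * ω.1 else -(K * ω.1) with hUm
  have hUmMeas : Measurable Um := by
    apply Measurable.ite
    · exact measurableSet_le measurable_snd
        (((Stmt13Aux.continuous_pp hK0 hδ').measurable).comp measurable_fst)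
    · exact measurable_fst.const_mul K
    · exact (measurable_fst.const_mul K).neg
  refine ⟨ℝ × ℝ, inferInstance, P, inferInstance, Prod.fst, Um, measurable_fst, hUmMeas,
    ?_, ?_, ?_, ?_⟩
  · rw [hP, Measure.map_fst_prod, measure_univ, one_smul]
  · -- map Um = tiltedGaussian Km δ
    ext A hA
    rw [Measure.map_apply hUmMeas hA,
      ← ENNReal.toReal_eq_toReal_iff' (measure_ne_top _ _) (measure_ne_top _ _)]
    set fA : ℝ → ℝ := A.indicator (fun _ => (1:ℝ)) with hfA
    have hfAMeas : Measurable fA := measurable_const.indicator hA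
    have hfAbd : ∀ x, |fA x| ≤ 1 := fun x => by
      by_cases hx : x ∈ A <;> simp [hfA, Set.indicator_apply, hx]
    have h1 : (P (Um ⁻¹' A)).toReal = ∫ ω, fA (Um ω) ∂P := by
      rw [show ∫ ω, fA (Um ω) ∂P = ∫ ω, (Um ⁻¹' A).indicator (fun _ => (1:ℝ)) ω ∂P from
        integral_congr_ae (ae_of_all _ fun ω => by
          by_cases hω : Um ω ∈ A <;>
            simp [hfA, Set.indicator_apply, hω, Set.mem_preimage]),
        integral_indicator_const (1:ℝ) (hUmMeas hA), smul_eq_mul, mul_one, measureReal_def]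
    have h2 : Integrable (fun ω => fA (Um ω)) P := by
      refine (integrable_const (1:ℝ)).mono'
        ((hfAMeas.comp hUmMeas).aestronglyMeasurable) ?_
      filter_upwards with ω
      rw [Real.norm_eq_abs]
      exact hfAbd _
    rw [h1, MeasureTheory.integral_prod _ h2]
    have hInner : ∀ u : ℝ, (∫ t, fA (Um (u, t)) ∂ν)
        = Stmt13Aux.pp K δ u * fA (K * u) + Stmt13Aux.pm K δ u * fA (-(K * u)) := by
      intro u
      have : (fun t => fA (Um (u, t)))
          = fun t => if t ≤ Stmt13Aux.pp K δ u then fA (K * u) else fA (-(K * u)) := by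
        funext t
        rw [hUm]
        by_cases ht : t ≤ Stmt13Aux.pp K δ u <;> simp [ht]
      rw [this, hν]
      rw [Stmt13Aux.inner_int (fA (K * u)) (fA (-(K * u))) (Stmt13Aux.pp_nonneg hK1 hδ' u) (Stmt13Aux.pp_le_one hK1 hδ' u)]
      have hsum := Stmt13Aux.pp_add_pm hK0 hδ' u
      have : 1 - Stmt13Aux.pp K δ u = Stmt13Aux.pm K δ u := by linarith
      rw [this]
    rw [show (fun u => ∫ t, fA (Um (u, t)) ∂ν)
        = fun u => Stmt13Aux.pp K δ u * fA (K * u) + Stmt13Aux.pm K δ u * fA (-(K * u)) from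
      funext hInner]
    rw [Stmt13Aux.master hKm hKp hδ' hK0 hK1 hKK fA hfAMeas 1 hfAbd]
    rw [show ∫ u, fA u ∂(tiltedGaussian Km δ)
        = ((tiltedGaussian Km δ) A).toReal • (1:ℝ) from integral_indicator_const (1:ℝ) hA,
      smul_eq_mul, mul_one]
  · filter_upwards with ω
    rw [hUm]
    by_cases hc : ω.2 ≤ Stmt13Aux.pp K δ ω.1
    · left; simp [hc]
    · right; simp [hc]
  · filter_upwards with ω
    rw [hUm]
    by_cases hc : ω.2 ≤ Stmt13Aux.pp K δ ω.1 <;> simp only [hc, if_pos, if_neg, if_true,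
      if_false] <;> nlinarith [hKK]
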